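/- Fix γ > 0. For each integer k ≥ 1 the function ψ^(k)(z) = ((1+z)/2)·exp(γ(z−1)/(1+z+1/k)) is analytic on a neighborhood of the closed unit disk and satisfies exp((1/2π)∫_{−π}^{π} log|ψ^(k)(e^{−iλ})|² dλ) = (1/4)·exp(−2γk/(k+1)). Moreover, the limiting policy ψ^∞, with boundary values ψ^∞(e^{−iλ}) = ((1+e^{−iλ})/2)·exp(−iγ·tan(λ/2)), satisfies exp((1/2π)∫_{−π}^{π} log|ψ^∞(e^{−iλ})|² dλ) = 1/4. Hence lim_{k→∞} σ_S²(ψ^(k)) = e^{−2γ}/4 < 1/4 = σ_S²(ψ^∞): the supplier's mean squared forecast error jumps upward at the limiting policy, so ψ^∞ is strictly suboptimal while the sequence ψ^(k) is ε-optimal. -/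

import Mathlib

open MeasureTheory intervalIntegral

/-- The ε-optimal policy `ψ^(k)(z) = ((1+z)/2)·exp(γ(z−1)/(1+z+1/k))`. -/
noncomputable def psiK (γ : ℝ) (k : ℕ) : ℂ → ℂ :=
  fun z => ((1 + z) / 2) * Complex.exp ((γ : ℂ) * (z - 1) / (1 + z + 1 / (k : ℂ)))

/-- Boundary values of the limiting policy `ψ^∞`. -/
noncomputable def psiInfBdy (γ : ℝ) : ℝ → ℂ := fun l =>
  ((1 + Complex.exp (-Complex.I * l)) / 2) *
    Complex.exp (-Complex.I * (γ : ℂ) * (Real.tan (l / 2) : ℂ))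

/-- Supplier's MSFE of a circle function via Kolmogorov's formula. -/
noncomputable def sigmaS2c (F : ℝ → ℂ) : ℝ :=
  Real.exp ((1 / (2 * Real.pi)) * ∫ l in (-Real.pi)..Real.pi, Real.log (‖F l‖ ^ 2))

open Real Set Metric


lemma logsin_int_half : IntervalIntegrable (fun x => Real.log (Real.sin x)) volume 0 (π/2) := by
  have hb : IntervalIntegrable (fun x : ℝ => 2 * x ^ (-(1:ℝ)/2) + 2 * Real.log (π/2)) volume 0 (π/2) :=
    ((intervalIntegrable_rpow' (by norm_num)).const_mul 2).add intervalIntegrable_const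
  refine hb.mono_fun' ?_ ?_
  · exact (Real.measurable_log.comp Real.continuous_sin.measurable).aestronglyMeasurable
  · rw [Set.uIoc_of_le (by positivity)]
    refine (ae_restrict_iff' measurableSet_Ioc).2 (ae_of_all _ fun x hx => ?_)
    obtain ⟨hx0, hx2⟩ := hx
    have hπ2 : (1:ℝ) ≤ π/2 := by nlinarith [Real.pi_gt_three]
    have hlogπ2 : 0 ≤ Real.log (π/2) := Real.log_nonneg hπ2
    have hsin0 : 0 < Real.sin x := Real.sin_pos_of_pos_of_lt_pi hx0 (by nlinarith [Real.pi_gt_three])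
    have h1 : Real.log (Real.sin x) ≤ Real.log x := by
      apply Real.log_le_log hsin0 (Real.sin_le hx0.le)
    have h2 : Real.log x - Real.log (π/2) ≤ Real.log (Real.sin x) := by
      have := Real.mul_le_sin hx0.le hx2
      have h2' : Real.log (2/π*x) ≤ Real.log (Real.sin x) :=
        Real.log_le_log (by positivity) this
      have : Real.log (2/π*x) = Real.log x - Real.log (π/2) := by
        rw [Real.log_mul (by positivity) hx0.ne', Real.log_div (by norm_num) (by positivity),
          Real.log_div (by positivity) (by norm_num)]
        ring
      linarith
    have hrp : 0 < x ^ (-(1:ℝ)/2) := Real.rpow_pos_of_pos hx0 _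
    have hlogx : |Real.log x| ≤ 2 * x ^ (-(1:ℝ)/2) + Real.log (π/2) := by
      rcases le_or_gt x 1 with h | h
      · have : -Real.log x ≤ 2 * x ^ (-(1:ℝ)/2) := by
          have hs : 0 < Real.sqrt x := Real.sqrt_pos.2 hx0
          have : Real.log ((Real.sqrt x)⁻¹) ≤ (Real.sqrt x)⁻¹ - 1 :=
            Real.log_le_sub_one_of_pos (by positivity)
          have hls : Real.log ((Real.sqrt x)⁻¹) = -(1/2) * Real.log x := by
            rw [Real.log_inv, Real.log_sqrt hx0.le]; ring
          have hxr : x ^ (-(1:ℝ)/2) = (Real.sqrt x)⁻¹ := by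
            rw [Real.sqrt_eq_rpow, ← Real.rpow_neg hx0.le]
            norm_num
          rw [hxr]
          nlinarith
        rw [abs_of_nonpos (Real.log_nonpos hx0.le h)]
        linarith
      · rw [abs_of_nonneg (Real.log_nonneg h.le)]
        have : Real.log x ≤ Real.log (π/2) := Real.log_le_log (by linarith) hx2
        nlinarith
    have : |Real.log (Real.sin x)| ≤ |Real.log x| + Real.log (π/2) := by
      rw [abs_le]
      constructor
      · have := neg_abs_le (Real.log x); linarith
      · have := le_abs_self (Real.log x); linarith
    calc ‖Real.log (Real.sin x)‖ = |Real.log (Real.sin x)| := rfl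
      _ ≤ |Real.log x| + Real.log (π/2) := this
      _ ≤ 2 * x ^ (-(1:ℝ)/2) + 2 * Real.log (π/2) := by linarith

lemma logsin_int_second : IntervalIntegrable (fun x => Real.log (Real.sin x)) volume (π/2) π := by
  have h := logsin_int_half.comp_sub_left π
  simp only [Real.sin_pi_sub] at h
  norm_num at h
  rw [show π - π/2 = π/2 by ring] at h
  exact h.symm

lemma logsin_int : IntervalIntegrable (fun x => Real.log (Real.sin x)) volume 0 π :=
  logsin_int_half.trans logsin_int_second

lemma logcos_int_half : IntervalIntegrable (fun x => Real.log (Real.cos x)) volume 0 (π/2) := by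
  have h := logsin_int_half.comp_sub_left (π/2)
  simp only [Real.sin_pi_div_two_sub] at h
  norm_num at h
  exact h.symm

lemma integral_logsin : ∫ x in (0:ℝ)..π, Real.log (Real.sin x) = -π * Real.log 2 := by
  set S := ∫ x in (0:ℝ)..(π/2), Real.log (Real.sin x) with hS
  have hC : (∫ x in (0:ℝ)..(π/2), Real.log (Real.cos x)) = S := by
    have h := intervalIntegral.integral_comp_sub_left (a := 0) (b := π/2)
      (fun x => Real.log (Real.sin x)) (π/2)
    simp only [Real.sin_pi_div_two_sub] at h
    norm_num at h
    rw [hS, ← h]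
  have hsecond : (∫ x in (π/2:ℝ)..π, Real.log (Real.sin x)) = S := by
    have h := intervalIntegral.integral_comp_sub_left (a := 0) (b := π/2)
      (fun x => Real.log (Real.sin x)) π
    simp only [Real.sin_pi_sub] at h
    norm_num at h
    rw [show π - π/2 = π/2 by ring] at h
    rw [hS, ← h]
  have hsplit : (∫ x in (0:ℝ)..π, Real.log (Real.sin x)) = 2 * S := by
    rw [← intervalIntegral.integral_add_adjacent_intervals logsin_int_half logsin_int_second,
      hsecond, ← hS]
    ring
  have hdup : (∫ x in (0:ℝ)..(π/2), Real.log (Real.sin (2*x))) = S := by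
    have h := intervalIntegral.integral_comp_mul_left (a := 0) (b := π/2)
      (fun x => Real.log (Real.sin x)) (c := 2) two_ne_zero
    simp only [smul_eq_mul] at h
    norm_num at h
    rw [show 2*(π/2) = π by ring] at h
    rw [h, hsplit]
    ring
  have hae : (∫ x in (0:ℝ)..(π/2), Real.log (Real.sin (2*x))) =
      ∫ x in (0:ℝ)..(π/2), (Real.log 2 + (Real.log (Real.sin x) + Real.log (Real.cos x))) := by
    apply intervalIntegral.integral_congr_ae
    have h0 : ∀ᵐ x : ℝ, x ≠ π/2 := by
      refine (MeasureTheory.ae_iff).2 ?_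
      simpa using Real.volume_singleton
    filter_upwards [h0] with x hx hmem
    rw [Set.uIoc_of_le (by positivity)] at hmem
    have hx1 : 0 < x := hmem.1
    have hx2 : x < π/2 := lt_of_le_of_ne hmem.2 hx
    have hs : 0 < Real.sin x := Real.sin_pos_of_pos_of_lt_pi hx1 (by nlinarith [Real.pi_pos])
    have hc : 0 < Real.cos x := Real.cos_pos_of_mem_Ioo ⟨by linarith [Real.pi_pos], hx2⟩
    rw [Real.sin_two_mul, Real.log_mul (by positivity) hc.ne', Real.log_mul (by norm_num) hs.ne']
    ring
  have hsum : (∫ x in (0:ℝ)..(π/2), (Real.log 2 + (Real.log (Real.sin x) + Real.log (Real.cos x))))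
      = (π/2) * Real.log 2 + (S + S) := by
    rw [intervalIntegral.integral_add intervalIntegrable_const
      (logsin_int_half.add logcos_int_half),
      intervalIntegral.integral_add logsin_int_half logcos_int_half, hC, ← hS]
    simp
  have hkey : S = -(π/2) * Real.log 2 := by
    have h2 := hae.symm.trans hdup
    rw [hsum] at h2
    linarith
  rw [hsplit, hkey]
  ring

lemma logcos_half_eq : (fun l : ℝ => Real.log (Real.cos (l/2))) =
    fun l : ℝ => Real.log (Real.sin ((1/2) * (l + π))) := by
  funext l
  rw [show (1/2) * (l + π) = l/2 + π/2 by ring, Real.sin_add_pi_div_two]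

lemma logcoshalf_int : IntervalIntegrable (fun l => Real.log (Real.cos (l/2))) volume (-π) π := by
  rw [logcos_half_eq]
  have h1 := logsin_int.comp_mul_left (c := 1/2)
  norm_num at h1
  have h2 := h1.comp_add_right π
  norm_num at h2
  convert h2 using 2
  ring

lemma integral_logcoshalf :
    ∫ l in (-π:ℝ)..π, Real.log (Real.cos (l/2)) = -2*π * Real.log 2 := by
  rw [logcos_half_eq]
  have h2 : (∫ l in (-π:ℝ)..π, Real.log (Real.sin ((1/2) * (l + π)))) =
      ∫ u in (0:ℝ)..(2*π), Real.log (Real.sin ((1/2) * u)) := by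
    have := intervalIntegral.integral_comp_add_right (a := -π) (b := π)
      (fun u => Real.log (Real.sin ((1/2) * u))) π
    rw [this, show -π + π = (0:ℝ) by ring, show π + π = 2*π by ring]
  rw [h2]
  have h3 := intervalIntegral.integral_comp_mul_left (a := 0) (b := 2*π)
    (fun x => Real.log (Real.sin x)) (c := (1/2:ℝ)) (by norm_num)
  rw [h3, show (1/2:ℝ) * 0 = 0 by ring, show (1/2:ℝ)*(2*π) = π by ring]
  rw [smul_eq_mul, integral_logsin]
  ring

lemma norm_half_one_add : ∀ l : ℝ, ‖(1 + Complex.exp (-Complex.I * l))/2‖^2 = Real.cos (l/2)^2 := by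
  intro l
  have h1 : (-Complex.I * l) = ((-l : ℝ) : ℂ) * Complex.I := by push_cast; ring
  rw [h1, Complex.exp_mul_I]
  have h2 : (1 : ℂ) + (Complex.cos ((-l : ℝ) : ℂ) + Complex.sin ((-l : ℝ) : ℂ) * Complex.I) =
      ((1 + Real.cos l : ℝ) : ℂ) + ((-Real.sin l : ℝ) : ℂ) * Complex.I := by
    push_cast
    rw [Complex.cos_neg, Complex.sin_neg]
    ring
  rw [h2, norm_div, Complex.norm_def, Complex.normSq_add_mul_I, div_pow,
    Real.sq_sqrt (by positivity)]
  have h3 : ((1 + Real.cos l)^2 + (-Real.sin l)^2) = 2 + 2 * Real.cos l := by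
    nlinarith [Real.sin_sq_add_cos_sq l]
  rw [h3]
  have hc : Real.cos (l/2)^2 = (1 + Real.cos l)/2 := by
    have := Real.cos_sq (l/2)
    rw [show 2*(l/2) = l by ring] at this
    rw [this]; ring
  have h4 : ‖(2:ℂ)‖ = 2 := by norm_num
  rw [h4, hc]
  ring
lemma mean_value (f : ℂ → ℂ) (hf : DiffContOnCl ℂ f (ball (0:ℂ) 1)) :
    (∫ θ in (0:ℝ)..(2*π), f (Complex.exp (Complex.I * θ))) = 2*π * f 0 := by
  have h := hf.circleIntegral_sub_inv_smul (w := 0) (by simp)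
  simp only [circleIntegral, deriv_circleMap, circleMap_zero, sub_zero, smul_eq_mul,
    Complex.ofReal_one, one_mul] at h
  have h2 : ∀ θ : ℝ, (Complex.exp (θ * Complex.I) * Complex.I) *
      ((Complex.exp (θ * Complex.I))⁻¹ * f (Complex.exp (θ * Complex.I)))
      = Complex.I * f (Complex.exp (Complex.I * θ)) := by
    intro θ
    have hne : Complex.exp (θ * Complex.I) ≠ 0 := Complex.exp_ne_zero _
    rw [mul_comm (θ:ℂ) Complex.I]
    field_simp
  rw [intervalIntegral.integral_congr (fun θ _ => h2 θ)] at h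
  rw [intervalIntegral.integral_const_mul] at h
  have h4 : (2:ℂ) * (π:ℝ) * Complex.I * f 0 = Complex.I * (2*(π:ℝ) * f 0) := by ring
  have h3 := mul_left_cancel₀ Complex.I_ne_zero (h.trans h4)
  rw [h3]

lemma den_ne_zero (k : ℕ) (hk : 1 ≤ k) (z : ℂ) (hz : ‖z‖ ≤ 1 + 1/(2*(k:ℝ))) :
    1 + z + 1/(k:ℂ) ≠ 0 := by
  intro h
  have hk0 : (0:ℝ) < k := by exact_mod_cast hk
  have hz' : z = -(1 + 1/(k:ℂ)) := by linear_combination h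
  rw [hz'] at hz
  have hnrm : ‖-(1 + 1/(k:ℂ))‖ = 1 + 1/(k:ℝ) := by
    rw [norm_neg]
    rw [show (1 : ℂ) + 1/(k:ℂ) = ((1 + 1/(k:ℝ) : ℝ) : ℂ) by push_cast; ring,
      Complex.norm_real, Real.norm_eq_abs, abs_of_pos (by positivity)]
  rw [hnrm] at hz
  have h1 : 1/(2*(k:ℝ)) < 1/(k:ℝ) := by
    apply div_lt_div_of_pos_left one_pos hk0
    linarith
  linarith

lemma diff_on_U (k : ℕ) (hk : 1 ≤ k) :
    DifferentiableOn ℂ (fun z : ℂ => (z - 1) / (1 + z + 1/(k:ℂ)))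
    (ball (0:ℂ) (1 + 1/(2*(k:ℝ)))) := by
  apply DifferentiableOn.div
  · exact (differentiable_id.sub_const 1).differentiableOn
  · exact ((differentiable_id.const_add 1).add_const _).differentiableOn
  · intro z hz
    exact den_ne_zero k hk z (le_of_lt (by simpa [Complex.dist_eq] using hz))

lemma re_integral (k : ℕ) (hk : 1 ≤ k) :
    (∫ l in (-π:ℝ)..π,
        ((Complex.exp (-Complex.I * l) - 1) / (1 + Complex.exp (-Complex.I * l) + 1/(k:ℂ))).re)
      = -2*π*((k:ℝ)/(k+1)) := by
  set f : ℂ → ℂ := fun z => (z - 1) / (1 + z + 1/(k:ℂ)) with hf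
  have hk0 : (0:ℝ) < k := by exact_mod_cast hk
  have hkc : (k:ℂ) ≠ 0 := by
    exact Nat.cast_ne_zero.2 (by omega : k ≠ 0)
  have hkpos : (0:ℝ) < 1/(2*(k:ℝ)) := by positivity
  have hdc : DiffContOnCl ℂ f (ball (0:ℂ) 1) := by
    apply DifferentiableOn.diffContOnCl
    apply (diff_on_U k hk).mono
    rw [closure_ball (0:ℂ) one_ne_zero]
    intro z hz
    simp only [mem_closedBall, Complex.dist_eq, sub_zero] at hz
    rw [mem_ball, dist_zero_right]
    have : ‖z‖ ≤ 1 := hz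
    calc ‖z‖ = ‖z‖ := rfl
      _ ≤ 1 := hz
      _ < 1 + 1/(2*(k:ℝ)) := by linarith
  have hmv := mean_value f hdc
  -- continuity of the circle composition
  have hcont : Continuous (fun θ : ℝ => f (Complex.exp (Complex.I * θ))) := by
    have hc1 : Continuous (fun θ : ℝ => Complex.exp (Complex.I * θ)) := by
      continuity
    rw [hf]
    refine Continuous.div (by continuity) (by continuity) ?_
    intro θ
    apply den_ne_zero k hk
    rw [Complex.norm_exp]
    simp
  -- take real parts
  have hre : (∫ θ in (0:ℝ)..(2*π), (f (Complex.exp (Complex.I * θ))).re)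
      = (2 * (π:ℂ) * f 0).re := by
    have h5 := Complex.reCLM.intervalIntegral_comp_comm
      (a := 0) (b := 2*π) (μ := volume) (hcont.intervalIntegrable _ _)
    rw [hmv] at h5
    simpa using h5
  -- value at 0
  have hf0 : (2 * (π:ℂ) * f 0).re = -2*π*((k:ℝ)/(k+1)) := by
    have hk1 : ((k:ℂ)+1) ≠ 0 := Nat.cast_add_one_ne_zero k
    have hval : f 0 = ((-((k:ℝ)/(k+1)) : ℝ) : ℂ) := by
      rw [hf]
      push_cast
      field_simp
      ring
    rw [hval, show (2 * (π:ℂ) * ((-((k:ℝ)/(k+1)) : ℝ) : ℂ)) = (((2*π * (-((k:ℝ)/(k+1)))) : ℝ) : ℂ) by push_cast; ring,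
      Complex.ofReal_re]
    ring
  -- periodicity
  have hper : Function.Periodic (fun θ : ℝ => (f (Complex.exp (Complex.I * θ))).re) (2*π) := by
    intro θ
    simp only
    rw [show Complex.I * (↑(θ + 2*π)) = Complex.I * θ + 2*π*Complex.I by push_cast; ring,
      Complex.exp_add, Complex.exp_two_pi_mul_I, mul_one]
  have hshift : (∫ l in (-π:ℝ)..π, (f (Complex.exp (Complex.I * l))).re)
      = ∫ θ in (0:ℝ)..(2*π), (f (Complex.exp (Complex.I * θ))).re := by
    have := hper.intervalIntegral_add_eq (-π) 0
    rw [show -π + 2*π = π by ring, show (0:ℝ) + 2*π = 2*π by ring] at this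
    exact this
  -- reflection
  have hrefl : (∫ l in (-π:ℝ)..π,
      ((Complex.exp (-Complex.I * l) - 1) / (1 + Complex.exp (-Complex.I * l) + 1/(k:ℂ))).re)
      = ∫ l in (-π:ℝ)..π, (f (Complex.exp (Complex.I * l))).re := by
    have hcomp := intervalIntegral.integral_comp_neg (a := -π) (b := π)
      (fun l => (f (Complex.exp (Complex.I * l))).re)
    rw [neg_neg] at hcomp
    rw [← hcomp]
    apply intervalIntegral.integral_congr
    intro l _
    simp only
    rw [show Complex.I * (↑(-l)) = -Complex.I * l by push_cast; ring, hf]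
  rw [hrefl, hshift, hre, hf0]


lemma logsq_int : IntervalIntegrable (fun l => Real.log (Real.cos (l/2)^2)) volume (-π) π := by
  have he : (fun l : ℝ => Real.log (Real.cos (l/2)^2)) = fun l => 2 * Real.log (Real.cos (l/2)) := by
    funext l; rw [Real.log_pow]; norm_num
  rw [he]
  exact logcoshalf_int.const_mul 2

lemma integral_logsq : ∫ l in (-π:ℝ)..π, Real.log (Real.cos (l/2)^2) = -4*π * Real.log 2 := by
  have he : (fun l : ℝ => Real.log (Real.cos (l/2)^2)) = fun l => 2 * Real.log (Real.cos (l/2)) := by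
    funext l; rw [Real.log_pow]; norm_num
  rw [he, intervalIntegral.integral_const_mul, integral_logcoshalf]
  ring

lemma exp_neg_two_log_two : Real.exp (-(2 * Real.log 2)) = 1/4 := by
  rw [show (2:ℝ) * Real.log 2 = Real.log 4 by
      rw [show (4:ℝ) = 2^2 by norm_num, Real.log_pow]; norm_num,
    Real.exp_neg, Real.exp_log (by norm_num : (0:ℝ) < 4)]
  norm_num

lemma exp_on_circle_norm (l : ℝ) : ‖Complex.exp (-Complex.I * l)‖ = 1 := by
  rw [Complex.norm_exp]
  simp

lemma re_I_zero (a b : ℝ) : (-Complex.I * (a:ℂ) * (b:ℂ)).re = 0 := by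
  simp [Complex.mul_re]

lemma sigma_inf (γ : ℝ) : sigmaS2c (psiInfBdy γ) = 1/4 := by
  unfold sigmaS2c
  have hnorm : ∀ l : ℝ, ‖psiInfBdy γ l‖^2 = Real.cos (l/2)^2 := by
    intro l
    unfold psiInfBdy
    rw [norm_mul, mul_pow, norm_half_one_add]
    have : ‖Complex.exp (-Complex.I * (γ:ℂ) * ((Real.tan (l/2) : ℝ) : ℂ))‖ = 1 := by
      rw [Complex.norm_exp]
      rw [re_I_zero, Real.exp_zero]
    rw [this]
    ring
  have : (∫ l in (-π:ℝ)..π, Real.log (‖psiInfBdy γ l‖^2))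
      = ∫ l in (-π:ℝ)..π, Real.log (Real.cos (l/2)^2) := by
    apply intervalIntegral.integral_congr
    intro l _
    show Real.log (‖psiInfBdy γ l‖^2) = Real.log (Real.cos (l/2)^2)
    rw [hnorm l]
  rw [this, integral_logsq]
  rw [show 1 / (2*π) * (-4*π*Real.log 2) = -(2 * Real.log 2) by
    field_simp
    ring]
  exact exp_neg_two_log_two

lemma sigma_k (γ : ℝ) (k : ℕ) (hk : 1 ≤ k) :
    sigmaS2c (fun l => psiK γ k (Complex.exp (-Complex.I * l))) =
      (1 / 4) * Real.exp (-2 * γ * k / (k + 1)) := by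
  unfold sigmaS2c
  set q : ℝ → ℝ := fun l =>
    ((Complex.exp (-Complex.I * l) - 1) / (1 + Complex.exp (-Complex.I * l) + 1/(k:ℂ))).re with hq
  have hcongr : (∫ l in (-π:ℝ)..π, Real.log (‖psiK γ k (Complex.exp (-Complex.I * l))‖^2))
      = ∫ l in (-π:ℝ)..π, (Real.log (Real.cos (l/2)^2) + 2*γ * q l) := by
    apply intervalIntegral.integral_congr_ae
    have h0 : ∀ᵐ x : ℝ, x ≠ π := by
      refine (MeasureTheory.ae_iff).2 ?_
      simpa using Real.volume_singleton
    filter_upwards [h0] with l hl hmem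
    rw [Set.uIoc_of_le (by linarith [Real.pi_pos] : -π ≤ π)] at hmem
    have hl1 : -π < l := hmem.1
    have hl2 : l < π := lt_of_le_of_ne hmem.2 hl
    have hcos : 0 < Real.cos (l/2) :=
      Real.cos_pos_of_mem_Ioo ⟨by linarith, by linarith⟩
    unfold psiK
    rw [norm_mul, mul_pow, norm_half_one_add]
    rw [Complex.norm_exp]
    rw [Real.log_mul (by positivity) (by positivity)]
    rw [Real.log_pow, Real.log_pow, Real.log_exp]
    have hre : ((γ:ℂ) * (Complex.exp (-Complex.I * l) - 1) /
        (1 + Complex.exp (-Complex.I * l) + 1/(k:ℂ))).re = γ * q l := by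
      rw [mul_div_assoc, hq]
      simp [Complex.mul_re]
    rw [hre]
    push_cast
    ring
  have hqcont : Continuous q := by
    rw [hq]
    apply Complex.continuous_re.comp
    apply Continuous.div
    · continuity
    · continuity
    · intro l
      apply den_ne_zero k hk
      rw [exp_on_circle_norm]
      have : (0:ℝ) < 1/(2*(k:ℝ)) := by
        have : (0:ℝ) < k := by exact_mod_cast hk
        positivity
      linarith
  rw [hcongr, intervalIntegral.integral_add logsq_int
    (show IntervalIntegrable (fun l => 2*γ * q l) volume (-π) π from
      (continuous_const.mul hqcont).intervalIntegrable _ _), integral_logsq,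
    intervalIntegral.integral_const_mul, re_integral k hk]
  rw [show 1/(2*π) * (-4*π*Real.log 2 + 2*γ * (-2*π*((k:ℝ)/(k+1)))) =
      -(2*Real.log 2) + (-2*γ*(k:ℝ)/((k:ℝ)+1)) by
    have hπ := Real.pi_ne_zero
    field_simp
    ring]
  rw [Real.exp_add, exp_neg_two_log_two]
/-- Each `ψ^(k)` is analytic near the closed unit disk with
`σ_S²(ψ^(k)) = (1/4)e^{−2γk/(k+1)}`, the limiting policy has `σ_S²(ψ^∞) = 1/4`,
and `lim_k σ_S²(ψ^(k)) = e^{−2γ}/4 < 1/4 = σ_S²(ψ^∞)`: the supplier's forecast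
error jumps upward at the limit. -/
theorem stmt_18 (γ : ℝ) (hγ : 0 < γ) :
    (∀ k : ℕ, 1 ≤ k →
      (∃ U : Set ℂ, IsOpen U ∧ Metric.closedBall (0 : ℂ) 1 ⊆ U ∧
        AnalyticOnNhd ℂ (psiK γ k) U) ∧
      sigmaS2c (fun l => psiK γ k (Complex.exp (-Complex.I * l))) =
        (1 / 4) * Real.exp (-2 * γ * k / (k + 1))) ∧
    sigmaS2c (psiInfBdy γ) = 1 / 4 ∧
    Filter.Tendsto (fun k : ℕ => sigmaS2c (fun l => psiK γ k (Complex.exp (-Complex.I * l))))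
      Filter.atTop (nhds (Real.exp (-2 * γ) / 4)) ∧
    Real.exp (-2 * γ) / 4 < 1 / 4 := by
  have hlim : Filter.Tendsto (fun k : ℕ => sigmaS2c (fun l => psiK γ k (Complex.exp (-Complex.I * l))))
      Filter.atTop (nhds (Real.exp (-2 * γ) / 4)) := by
    have hev : (fun k : ℕ => (1/4) * Real.exp (-2 * γ * k / (k + 1))) =ᶠ[Filter.atTop]
        (fun k : ℕ => sigmaS2c (fun l => psiK γ k (Complex.exp (-Complex.I * l)))) := by
      filter_upwards [Filter.eventually_ge_atTop 1] with k hk using (sigma_k γ k hk).symm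
    have h1 : Filter.Tendsto (fun k : ℕ => ((k:ℝ)/((k:ℝ)+1))) Filter.atTop (nhds 1) :=
      tendsto_natCast_div_add_atTop 1
    have h2 : Filter.Tendsto (fun k : ℕ => -2*γ*(k:ℝ)/((k:ℝ)+1)) Filter.atTop (nhds (-2*γ)) := by
      have h2' := h1.const_mul (-2*γ)
      rw [mul_one] at h2'
      apply h2'.congr
      intro k
      ring
    have h3 : Filter.Tendsto (fun k : ℕ => (1/4) * Real.exp (-2 * γ * k / (k + 1)))
        Filter.atTop (nhds ((1/4) * Real.exp (-2*γ))) :=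
      ((Real.continuous_exp.tendsto _).comp h2).const_mul (1/4)
    have := h3.congr' hev
    rwa [show (1/4) * Real.exp (-2*γ) = Real.exp (-2*γ)/4 by ring] at this
  refine ⟨fun k hk => ⟨?_, sigma_k γ k hk⟩, sigma_inf γ, hlim, ?_⟩
  · refine ⟨Metric.ball 0 (1 + 1/(2*(k:ℝ))), isOpen_ball, ?_, ?_⟩
    · apply closedBall_subset_ball
      have hk0 : (0:ℝ) < k := by exact_mod_cast hk
      have : (0:ℝ) < 1/(2*(k:ℝ)) := by positivity
      linarith
    · apply DifferentiableOn.analyticOnNhd ?_ isOpen_ball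
      unfold psiK
      apply DifferentiableOn.mul
      · exact (((differentiable_const (1:ℂ)).add differentiable_id).div_const 2).differentiableOn
      · apply DifferentiableOn.cexp
        apply DifferentiableOn.div
        · exact ((differentiable_id.sub_const 1).const_mul _).differentiableOn
        · exact ((differentiable_id.const_add 1).add_const _).differentiableOn
        · intro z hz
          apply den_ne_zero k hk
          rw [mem_ball, dist_zero_right] at hz
          exact hz.le
  · have h1 : Real.exp (-2*γ) < 1 := by
      rw [Real.exp_lt_one_iff]
      linarith
    linarith
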